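/- Let m ≥ 1, let M, N ⊆ [m] with ∅ ≠ M ⊊ [m] and N ⊊ [m], and let D = aΔ_M^c + cΔ_N^c ⊆ E^m. Then the binary Gray image Φ(C^L_D) is an F₂-linear code of length (2^{m+1}−2^{|M|+1})(2^m−2^{|N|}), with 2^{2m} codewords (F₂-dimension 2m), and minimum nonzero Hamming weight (2^{m−1}−2^{|M|−1})(2^m−2^{|N|}). Moreover, if |M|+|N| ≥ 3, then Φ(C^L_D) is self-orthogonal. -/

import Mathlib

open Finset

/-- The simplicial complex `Δ_M ⊆ 𝔽₂^m` generated by `M ⊆ [m]`: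
all vectors whose support is contained in `M`. -/
def deltaC {m : ℕ} (M : Finset (Fin m)) : Finset (Fin m → ZMod 2) :=
  Finset.univ.filter (fun w => ∀ i, w i ≠ 0 → i ∈ M)

/-- Dot product over `𝔽₂`. -/
def dotp {m : ℕ} (x y : Fin m → ZMod 2) : ZMod 2 := ∑ i, x i * y i

/-- The Gray map on a single element `a·s + c·t ↔ (s, t)` of `E = 𝔽₂ × 𝔽₂`:
`Φ(as + ct) = (t, s + t)`. -/
def grayPair (e : ZMod 2 × ZMod 2) : Fin 2 → ZMod 2 := ![e.2, e.1 + e.2]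

/-- The left codeword `c^L_D(v)` for `v = aα + cβ ↔ (α, β)`:
its coordinate at `d = (t₁, t₂) ∈ D` is `a(α·t₁) + c(β·t₁) ↔ (α·t₁, β·t₁)`. -/
def cwL {m : ℕ} (Ds : Finset ((Fin m → ZMod 2) × (Fin m → ZMod 2)))
    (v : (Fin m → ZMod 2) × (Fin m → ZMod 2)) :
    {d // d ∈ Ds} → ZMod 2 × ZMod 2 :=
  fun d => (dotp v.1 d.1.1, dotp v.2 d.1.1)

/-- The Gray image `Φ(c^L_D(v)) ∈ 𝔽₂^{2|D|}` of the left codeword `c^L_D(v)`;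
its Hamming weight (`hammingNorm`) is the Lee weight of `c^L_D(v)`. -/
def gcwL {m : ℕ} (Ds : Finset ((Fin m → ZMod 2) × (Fin m → ZMod 2)))
    (v : (Fin m → ZMod 2) × (Fin m → ZMod 2)) :
    {d // d ∈ Ds} × Fin 2 → ZMod 2 :=
  fun x => grayPair (cwL Ds v x.1) x.2

/-- The right codeword `c^R_D(v)` for `v = aα + cβ ↔ (α, β)`:
its coordinate at `d = (t₁, t₂) ∈ D` is `a(t₁·α) + c(t₂·α) ↔ (t₁·α, t₂·α)`. -/
def cwR {m : ℕ} (Ds : Finset ((Fin m → ZMod 2) × (Fin m → ZMod 2)))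
    (v : (Fin m → ZMod 2) × (Fin m → ZMod 2)) :
    {d // d ∈ Ds} → ZMod 2 × ZMod 2 :=
  fun d => (dotp d.1.1 v.1, dotp d.1.2 v.1)

/-- The Gray image `Φ(c^R_D(v)) ∈ 𝔽₂^{2|D|}` of the right codeword `c^R_D(v)`;
its Hamming weight (`hammingNorm`) is the Lee weight of `c^R_D(v)`. -/
def gcwR {m : ℕ} (Ds : Finset ((Fin m → ZMod 2) × (Fin m → ZMod 2)))
    (v : (Fin m → ZMod 2) × (Fin m → ZMod 2)) :
    {d // d ∈ Ds} × Fin 2 → ZMod 2 :=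
  fun x => grayPair (cwR Ds v x.1) x.2

/-! ### Auxiliary lemmas -/

section Aux

variable {m : ℕ}

lemma mem_deltaC' {M : Finset (Fin m)} {w : Fin m → ZMod 2} :
    w ∈ deltaC M ↔ ∀ i, w i ≠ 0 → i ∈ M := by simp [deltaC]

lemma dotp_add_left' (x y t : Fin m → ZMod 2) :
    dotp (x + y) t = dotp x t + dotp y t := by
  simp [dotp, add_mul, Finset.sum_add_distrib]

lemma dotp_add_right' (x t s : Fin m → ZMod 2) :
    dotp x (t + s) = dotp x t + dotp x s := by
  simp [dotp, mul_add, Finset.sum_add_distrib]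

lemma dotp_single' (x : Fin m → ZMod 2) (i : Fin m) :
    dotp x (Pi.single i 1) = x i := by
  rw [dotp, Finset.sum_eq_single i]
  · simp
  · intro b _ hb; simp [Pi.single_apply, hb]
  · simp

lemma dotp_zero_left' (t : Fin m → ZMod 2) : dotp 0 t = 0 := by simp [dotp]

lemma single_add_single' (i : Fin m) :
    (Pi.single i 1 : Fin m → ZMod 2) + Pi.single i 1 = 0 := by
  funext j; simp [CharTwo.add_self_eq_zero]

lemma card_deltaC {M : Finset (Fin m)} : (deltaC M).card = 2 ^ M.card := by
  classical
  have : (deltaC M).card = Fintype.card (↥M → ZMod 2) := by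
    rw [← Finset.card_univ]
    refine Finset.card_nbij' (fun w => fun i : ↥M => w i.1)
      (fun u => fun i => if h : i ∈ M then u ⟨i, h⟩ else 0) ?_ ?_ ?_ ?_
    · intro w _; exact Finset.mem_univ _
    · intro u _
      simp only [deltaC, Finset.mem_coe, Finset.mem_filter, Finset.mem_univ, true_and]
      intro i hi
      by_contra h
      simp [h] at hi
    · intro w hw
      funext i
      simp only [deltaC, Finset.mem_coe, Finset.mem_filter, Finset.mem_univ, true_and] at hw
      by_cases h : i ∈ M
      · simp [h]
      · simp only [h, dif_neg, not_false_iff]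
        by_contra h'
        exact h (hw i (Ne.symm h'))
    · intro u _; funext i; simp [i.2]
  rw [this]
  simp [Fintype.card_fun]

lemma card_deltaC_compl {M : Finset (Fin m)} :
    ((deltaC M)ᶜ).card = 2 ^ m - 2 ^ M.card := by
  rw [Finset.card_compl, card_deltaC]
  congr 1
  simp [Fintype.card_fun]

lemma half_count (S : Finset (Fin m → ZMod 2)) (γ : Fin m → ZMod 2) (i : Fin m)
    (hi : γ i ≠ 0) (hS : ∀ t ∈ S, t + Pi.single i 1 ∈ S) :
    2 * (S.filter (fun t => dotp γ t ≠ 0)).card = S.card := by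
  classical
  have h1 : ∀ x : ZMod 2, x ≠ 0 → x = 1 := by decide
  have key : (S.filter (fun t => dotp γ t ≠ 0)).card
      = (S.filter (fun t => ¬ dotp γ t ≠ 0)).card := by
    refine Finset.card_nbij' (fun t => t + Pi.single i 1) (fun t => t + Pi.single i 1)
      ?_ ?_ ?_ ?_
    · intro t ht
      simp only [Finset.mem_coe, Finset.mem_filter, not_not] at ht ⊢
      refine ⟨hS t ht.1, ?_⟩
      rw [dotp_add_right', dotp_single', h1 _ ht.2, h1 _ hi]
      decide
    · intro t ht
      simp only [Finset.mem_coe, Finset.mem_filter, not_not] at ht ⊢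
      refine ⟨hS t ht.1, ?_⟩
      rw [dotp_add_right', dotp_single', ht.2, h1 _ hi]
      decide
    · intro t _; simp only []; rw [add_assoc, single_add_single', add_zero]
    · intro t _; simp only []; rw [add_assoc, single_add_single', add_zero]
  have := Finset.card_filter_add_card_filter_not
    (s := S) (p := fun t => dotp γ t ≠ 0)
  omega

lemma filter_compl_card (p : (Fin m → ZMod 2) → Prop) [DecidablePred p]
    (S : Finset (Fin m → ZMod 2)) :
    ((Sᶜ).filter p).card = (Finset.univ.filter p).card - (S.filter p).card := by
  have h : Finset.univ.filter p = S.filter p ∪ (Sᶜ).filter p := by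
    rw [← Finset.filter_union, Finset.union_compl]
  have hd : Disjoint (S.filter p) ((Sᶜ).filter p) :=
    Finset.disjoint_filter_filter (disjoint_compl_right)
  rw [h, Finset.card_union_of_disjoint hd]
  omega

lemma count_univ {γ : Fin m → ZMod 2} (hγ : γ ≠ 0) :
    (Finset.univ.filter (fun t => dotp γ t ≠ 0)).card = 2 ^ (m - 1) := by
  obtain ⟨i, hi⟩ := Function.ne_iff.mp hγ
  have h := half_count Finset.univ γ i hi (fun t _ => Finset.mem_univ _)
  rw [Finset.card_univ] at h
  have hcard : Fintype.card (Fin m → ZMod 2) = 2 ^ m := by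
    simp [Fintype.card_fun]
  rw [hcard] at h
  have hm : 1 ≤ m := i.pos
  have : 2 ^ m = 2 * 2 ^ (m - 1) := by
    conv_lhs => rw [← Nat.sub_add_cancel hm]
    ring
  omega

lemma count_delta_meet {M : Finset (Fin m)} {γ : Fin m → ZMod 2}
    (hiM : ∃ i ∈ M, γ i ≠ 0) :
    ((deltaC M).filter (fun t => dotp γ t ≠ 0)).card = 2 ^ (M.card - 1) := by
  obtain ⟨i, hiM, hi⟩ := hiM
  have hS : ∀ t ∈ deltaC M, t + Pi.single i 1 ∈ deltaC M := by
    intro t ht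
    simp only [deltaC, Finset.mem_filter, Finset.mem_univ, true_and] at ht ⊢
    intro j hj
    by_cases hji : j = i
    · exact hji ▸ hiM
    · apply ht j
      simpa [Pi.single_apply, hji] using hj
  have h := half_count (deltaC M) γ i hi hS
  rw [card_deltaC] at h
  have hM : 1 ≤ M.card := Finset.card_pos.mpr ⟨i, hiM⟩
  have : 2 ^ M.card = 2 * 2 ^ (M.card - 1) := by
    conv_lhs => rw [← Nat.sub_add_cancel hM]
    ring
  omega

lemma count_delta_miss {M : Finset (Fin m)} {γ : Fin m → ZMod 2}
    (hγ : ∀ i ∈ M, γ i = 0) :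
    ((deltaC M).filter (fun t => dotp γ t ≠ 0)).card = 0 := by
  rw [Finset.card_eq_zero, Finset.filter_eq_empty_iff]
  intro t ht
  simp only [deltaC, Finset.mem_filter, Finset.mem_univ, true_and] at ht
  simp only [not_not, dotp]
  apply Finset.sum_eq_zero
  intro i _
  by_cases h : t i = 0
  · simp [h]
  · rw [hγ i (ht i h)]; ring

/-- The count `W γ` of `t ∈ (Δ_M)ᶜ` with `γ·t ≠ 0`, when `γ` has support meeting `M`. -/
lemma count_compl_meet {M : Finset (Fin m)} {γ : Fin m → ZMod 2}
    (hiM : ∃ i ∈ M, γ i ≠ 0) :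
    (((deltaC M)ᶜ).filter (fun t => dotp γ t ≠ 0)).card
      = 2 ^ (m - 1) - 2 ^ (M.card - 1) := by
  have hγ : γ ≠ 0 := by
    obtain ⟨i, _, hi⟩ := hiM
    intro h; exact hi (by simp [h])
  rw [filter_compl_card, count_univ hγ, count_delta_meet hiM]

lemma count_compl_miss {M : Finset (Fin m)} {γ : Fin m → ZMod 2}
    (hγ : γ ≠ 0) (hmiss : ∀ i ∈ M, γ i = 0) :
    (((deltaC M)ᶜ).filter (fun t => dotp γ t ≠ 0)).card = 2 ^ (m - 1) := by
  rw [filter_compl_card, count_univ hγ, count_delta_miss hmiss, Nat.sub_zero]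

lemma count_compl_zero {M : Finset (Fin m)} :
    (((deltaC M)ᶜ).filter (fun t => dotp (0 : Fin m → ZMod 2) t ≠ 0)).card = 0 := by
  rw [Finset.card_eq_zero, Finset.filter_eq_empty_iff]
  intro t _
  simp [dotp_zero_left']

lemma count_compl_lb {M : Finset (Fin m)} {γ : Fin m → ZMod 2} (hγ : γ ≠ 0) :
    2 ^ (m - 1) - 2 ^ (M.card - 1)
      ≤ (((deltaC M)ᶜ).filter (fun t => dotp γ t ≠ 0)).card := by
  classical
  by_cases h : ∃ i ∈ M, γ i ≠ 0
  · rw [count_compl_meet h]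
  · push_neg at h
    rw [count_compl_miss hγ h]
    exact Nat.sub_le _ _

lemma sum_compl_prod_coord {M : Finset (Fin m)} (h3 : 3 ≤ M.card) (i j : Fin m) :
    ∑ t ∈ (deltaC M)ᶜ, t i * t j = (0 : ZMod 2) := by
  classical
  have hk : (M \ {i, j}).Nonempty := by
    apply Finset.card_pos.mp
    have h1 := Finset.le_card_sdiff ({i, j} : Finset (Fin m)) M
    have h2 : ({i, j} : Finset (Fin m)).card ≤ 2 :=
      (Finset.card_insert_le _ _).trans (by simp)
    omega
  obtain ⟨k, hk⟩ := hk
  obtain ⟨hkM, hkij⟩ := Finset.mem_sdiff.mp hk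
  simp only [Finset.mem_insert, Finset.mem_singleton, not_or] at hkij
  have hmem : ∀ t : Fin m → ZMod 2, t ∈ (deltaC M)ᶜ → t + Pi.single k 1 ∈ (deltaC M)ᶜ := by
    intro t ht
    simp only [Finset.mem_compl, deltaC, Finset.mem_filter, Finset.mem_univ, true_and,
      not_forall] at ht ⊢
    obtain ⟨l, hl, hlM⟩ := ht
    refine ⟨l, ?_, hlM⟩
    have hlk : l ≠ k := fun h => hlM (h ▸ hkM)
    simpa [Pi.single_apply, hlk] using hl
  have hcoord : ∀ (t : Fin m → ZMod 2) (l : Fin m), l ≠ k →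
      (t + Pi.single k 1 : Fin m → ZMod 2) l = t l := by
    intro t l hlk
    simp [Pi.single_apply, hlk]
  refine Finset.sum_involution (fun t _ => t + Pi.single k 1) ?_ ?_ ?_ ?_
  · intro t _
    rw [hcoord t i (fun h => hkij.1 h.symm), hcoord t j (fun h => hkij.2 h.symm)]
    exact CharTwo.add_self_eq_zero _
  · intro t _ _ h
    have := congrFun h k
    simp [Pi.single_apply] at this
  · exact fun t ht => hmem t ht
  · intro t _
    rw [add_assoc, single_add_single', add_zero]

lemma sum_compl_dotp_mul {M : Finset (Fin m)} (h3 : 3 ≤ M.card) (γ δ : Fin m → ZMod 2) :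
    ∑ t ∈ (deltaC M)ᶜ, dotp γ t * dotp δ t = 0 := by
  classical
  have h1 : ∀ t : Fin m → ZMod 2, dotp γ t * dotp δ t
      = ∑ i, ∑ j, γ i * δ j * (t i * t j) := by
    intro t
    rw [dotp, dotp, Finset.sum_mul_sum]
    exact Finset.sum_congr rfl fun i _ => Finset.sum_congr rfl fun j _ => by ring
  calc ∑ t ∈ (deltaC M)ᶜ, dotp γ t * dotp δ t
      = ∑ t ∈ (deltaC M)ᶜ, ∑ i, ∑ j, γ i * δ j * (t i * t j) :=
        Finset.sum_congr rfl fun t _ => h1 t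
    _ = ∑ i, ∑ t ∈ (deltaC M)ᶜ, ∑ j, γ i * δ j * (t i * t j) := Finset.sum_comm
    _ = ∑ i, ∑ j, ∑ t ∈ (deltaC M)ᶜ, γ i * δ j * (t i * t j) :=
        Finset.sum_congr rfl fun i _ => Finset.sum_comm
    _ = ∑ i, ∑ j, γ i * δ j * ∑ t ∈ (deltaC M)ᶜ, t i * t j := by
        simp [Finset.mul_sum]
    _ = 0 := by
        simp [sum_compl_prod_coord h3]

/-- If `γ` pairs to zero with everything outside `Δ_M` and `M ≠ univ`, then `γ = 0`. -/
lemma dotp_vanish {M : Finset (Fin m)} (hMu : M ≠ Finset.univ)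
    {γ : Fin m → ZMod 2} (h : ∀ t ∈ (deltaC M)ᶜ, dotp γ t = 0) : γ = 0 := by
  classical
  obtain ⟨i₀, hi₀⟩ : ∃ i₀, i₀ ∉ M := by
    by_contra hc
    push_neg at hc
    exact hMu (Finset.eq_univ_iff_forall.mpr hc)
  have hsingle : (Pi.single i₀ 1 : Fin m → ZMod 2) ∈ (deltaC M)ᶜ := by
    simp only [Finset.mem_compl, mem_deltaC', not_forall]
    exact ⟨i₀, by simp, hi₀⟩
  have hγi₀ : γ i₀ = 0 := by
    have := h _ hsingle
    rwa [dotp_single'] at this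
  funext i
  by_cases hii : i = i₀
  · rw [hii]; exact hγi₀
  · have hmem : (Pi.single i 1 + Pi.single i₀ 1 : Fin m → ZMod 2) ∈ (deltaC M)ᶜ := by
      simp only [Finset.mem_compl, mem_deltaC', not_forall]
      refine ⟨i₀, ?_, hi₀⟩
      simp [Pi.single_apply, Ne.symm hii]
    have := h _ hmem
    rw [dotp_add_right', dotp_single', dotp_single', hγi₀, add_zero] at this
    simpa using this

/-- Reduction of sums over the index type of the Gray image to iterated sums. -/
lemma sum_gcwL_index {m : ℕ} (A B : Finset (Fin m → ZMod 2)) {R : Type*} [AddCommMonoid R]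
    (f : (Fin m → ZMod 2) → Fin 2 → R) :
    ∑ x : {d // d ∈ A ×ˢ B} × Fin 2, f x.1.1.1 x.2
      = ∑ t₁ ∈ A, ∑ t₂ ∈ B, ∑ j : Fin 2, f t₁ j := by
  rw [Fintype.sum_prod_type]
  rw [Finset.sum_coe_sort (A ×ˢ B) (fun d => ∑ j : Fin 2, f d.1 j)]
  rw [Finset.sum_product]

end Aux

section Formulas

variable {m : ℕ}

lemma gcwL_weight (A B : Finset (Fin m → ZMod 2)) (α β : Fin m → ZMod 2) :
    hammingNorm (gcwL (A ×ˢ B) (α, β))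
      = B.card * ((A.filter (fun t => dotp β t ≠ 0)).card
          + (A.filter (fun t => dotp (α + β) t ≠ 0)).card) := by
  classical
  have h0 : hammingNorm (gcwL (A ×ˢ B) (α, β))
      = ∑ x : {d // d ∈ A ×ˢ B} × Fin 2,
          (if grayPair (dotp α x.1.1.1, dotp β x.1.1.1) x.2 ≠ 0 then 1 else 0) := by
    rw [hammingNorm, Finset.card_filter]
    rfl
  rw [h0, sum_gcwL_index A B
    (fun t j => if grayPair (dotp α t, dotp β t) j ≠ 0 then (1 : ℕ) else 0)]
  have hj : ∀ t : Fin m → ZMod 2,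
      (∑ j : Fin 2, if grayPair (dotp α t, dotp β t) j ≠ 0 then (1 : ℕ) else 0)
        = (if dotp β t ≠ 0 then 1 else 0) + (if dotp (α + β) t ≠ 0 then 1 else 0) := by
    intro t
    rw [Fin.sum_univ_two]
    simp only [grayPair, Matrix.cons_val_zero, Matrix.cons_val_one, Matrix.head_cons,
      dotp_add_left']
    congr 1 <;> exact if_congr Iff.rfl rfl rfl
  calc ∑ t₁ ∈ A, ∑ _t₂ ∈ B, ∑ j : Fin 2,
        (if grayPair (dotp α t₁, dotp β t₁) j ≠ 0 then (1 : ℕ) else 0)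
      = ∑ t₁ ∈ A, B.card * ((if dotp β t₁ ≠ 0 then 1 else 0)
          + (if dotp (α + β) t₁ ≠ 0 then 1 else 0)) := by
        refine Finset.sum_congr rfl fun t₁ _ => ?_
        rw [Finset.sum_const, hj t₁, smul_eq_mul]
    _ = B.card * ((A.filter (fun t => dotp β t ≠ 0)).card
          + (A.filter (fun t => dotp (α + β) t ≠ 0)).card) := by
        rw [← Finset.mul_sum]
        congr 1
        rw [Finset.sum_add_distrib, Finset.card_filter, Finset.card_filter]

lemma gcwL_dot (A B : Finset (Fin m → ZMod 2))
    (v w : (Fin m → ZMod 2) × (Fin m → ZMod 2)) :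
    ∑ i, gcwL (A ×ˢ B) v i * gcwL (A ×ˢ B) w i
      = B.card • ∑ t ∈ A, (dotp v.2 t * dotp w.2 t
          + dotp (v.1 + v.2) t * dotp (w.1 + w.2) t) := by
  classical
  have h0 : ∑ i, gcwL (A ×ˢ B) v i * gcwL (A ×ˢ B) w i
      = ∑ x : {d // d ∈ A ×ˢ B} × Fin 2,
          grayPair (dotp v.1 x.1.1.1, dotp v.2 x.1.1.1) x.2
            * grayPair (dotp w.1 x.1.1.1, dotp w.2 x.1.1.1) x.2 := rfl
  rw [h0, sum_gcwL_index A B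
    (fun t j => grayPair (dotp v.1 t, dotp v.2 t) j * grayPair (dotp w.1 t, dotp w.2 t) j)]
  have hj : ∀ t : Fin m → ZMod 2,
      (∑ j : Fin 2, grayPair (dotp v.1 t, dotp v.2 t) j * grayPair (dotp w.1 t, dotp w.2 t) j)
        = dotp v.2 t * dotp w.2 t + dotp (v.1 + v.2) t * dotp (w.1 + w.2) t := by
    intro t
    rw [Fin.sum_univ_two]
    simp only [grayPair, Matrix.cons_val_zero, Matrix.cons_val_one, Matrix.head_cons,
      dotp_add_left']
  calc ∑ t₁ ∈ A, ∑ _t₂ ∈ B, ∑ j : Fin 2,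
        grayPair (dotp v.1 t₁, dotp v.2 t₁) j * grayPair (dotp w.1 t₁, dotp w.2 t₁) j
      = ∑ t₁ ∈ A, B.card • (dotp v.2 t₁ * dotp w.2 t₁
          + dotp (v.1 + v.2) t₁ * dotp (w.1 + w.2) t₁) := by
        refine Finset.sum_congr rfl fun t₁ _ => ?_
        rw [Finset.sum_const, hj t₁]
    _ = B.card • ∑ t ∈ A, (dotp v.2 t * dotp w.2 t
          + dotp (v.1 + v.2) t * dotp (w.1 + w.2) t) := by
        rw [Finset.smul_sum]

end Formulas

theorem stmt_8 {m : ℕ} (hm : 1 ≤ m) (M N : Finset (Fin m))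
    (hM : M ≠ ∅) (hMu : M ≠ Finset.univ) (hNu : N ≠ Finset.univ)
    (Ds : Finset ((Fin m → ZMod 2) × (Fin m → ZMod 2)))
    (hDs : Ds = (deltaC M)ᶜ ×ˢ (deltaC N)ᶜ) :
    (2 * Ds.card = (2 ^ (m + 1) - 2 ^ (M.card + 1)) * (2 ^ m - 2 ^ N.card)) ∧
    ((Finset.univ : Finset ((Fin m → ZMod 2) × (Fin m → ZMod 2))).image (gcwL Ds)).card = 2 ^ (2 * m) ∧
    (∀ v w : (Fin m → ZMod 2) × (Fin m → ZMod 2), ∃ z : (Fin m → ZMod 2) × (Fin m → ZMod 2), gcwL Ds z = gcwL Ds v + gcwL Ds w) ∧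
    (∀ v : (Fin m → ZMod 2) × (Fin m → ZMod 2), gcwL Ds v ≠ 0 → (2 ^ (m - 1) - 2 ^ (M.card - 1)) * (2 ^ m - 2 ^ N.card) ≤ hammingNorm (gcwL Ds v)) ∧
    (∃ v : (Fin m → ZMod 2) × (Fin m → ZMod 2), gcwL Ds v ≠ 0 ∧ hammingNorm (gcwL Ds v) = (2 ^ (m - 1) - 2 ^ (M.card - 1)) * (2 ^ m - 2 ^ N.card)) ∧
    (3 ≤ M.card + N.card →
      ∀ v w : (Fin m → ZMod 2) × (Fin m → ZMod 2), ∑ i, gcwL Ds v i * gcwL Ds w i = 0) := by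
  classical
  subst hDs
  -- basic numeric facts
  have hMc1 : 1 ≤ M.card := Finset.card_pos.mpr (Finset.nonempty_of_ne_empty hM)
  have hMcm : M.card < m := by
    rcases lt_or_eq_of_le (Finset.card_le_univ M) with h | h
    · simpa using h
    · exact absurd (Finset.eq_univ_of_card M (by simpa using h)) hMu
  have hNcm : N.card < m := by
    rcases lt_or_eq_of_le (Finset.card_le_univ N) with h | h
    · simpa using h
    · exact absurd (Finset.eq_univ_of_card N (by simpa using h)) hNu
  have hpowN : 2 ^ N.card < 2 ^ m := Nat.pow_lt_pow_right one_lt_two hNcm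
  have hpowM : 2 ^ M.card < 2 ^ m := Nat.pow_lt_pow_right one_lt_two hMcm
  have hpowW : 2 ^ (M.card - 1) < 2 ^ (m - 1) :=
    Nat.pow_lt_pow_right one_lt_two (by omega)
  have hzmod : ∀ x y : ZMod 2, x + y = 0 → x = y := by decide
  -- an element of (deltaC N)ᶜ
  obtain ⟨j₀, hj₀⟩ : ∃ j₀, j₀ ∉ N := by
    by_contra hc
    push_neg at hc
    exact hNu (Finset.eq_univ_iff_forall.mpr hc)
  have ht₂0 : (Pi.single j₀ 1 : Fin m → ZMod 2) ∈ (deltaC N)ᶜ := by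
    simp only [Finset.mem_compl, mem_deltaC', not_forall]
    exact ⟨j₀, by simp, hj₀⟩
  refine ⟨?_, ?_, ?_, ?_, ?_, ?_⟩
  -- 1. length
  · rw [Finset.card_product, card_deltaC_compl, card_deltaC_compl]
    have h2 : 2 ^ (m + 1) - 2 ^ (M.card + 1) = 2 * (2 ^ m - 2 ^ M.card) := by
      rw [pow_succ, pow_succ]
      omega
    rw [h2]
    ring
  -- 2. number of codewords
  · have hinj : Function.Injective (gcwL ((deltaC M)ᶜ ×ˢ (deltaC N)ᶜ)) := by
      intro v w h
      have key : ∀ t₁ ∈ (deltaC M)ᶜ,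
          dotp v.2 t₁ = dotp w.2 t₁ ∧ dotp v.1 t₁ = dotp w.1 t₁ := by
        intro t₁ ht₁
        have hd : (t₁, Pi.single j₀ 1) ∈ (deltaC M)ᶜ ×ˢ (deltaC N)ᶜ :=
          Finset.mem_product.mpr ⟨ht₁, ht₂0⟩
        have h0 := congrFun h (⟨(t₁, Pi.single j₀ 1), hd⟩, 0)
        have h1 := congrFun h (⟨(t₁, Pi.single j₀ 1), hd⟩, 1)
        simp only [gcwL, cwL, grayPair, Matrix.cons_val_zero, Matrix.cons_val_one,
          Matrix.head_cons] at h0 h1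
        refine ⟨h0, ?_⟩
        rw [h0] at h1
        exact add_right_cancel h1
      have hv1 : v.1 = w.1 := by
        have hz : v.1 + w.1 = 0 := by
          apply dotp_vanish hMu
          intro t ht
          rw [dotp_add_left', (key t ht).2]
          exact CharTwo.add_self_eq_zero _
        funext i
        exact hzmod _ _ (congrFun hz i)
      have hv2 : v.2 = w.2 := by
        have hz : v.2 + w.2 = 0 := by
          apply dotp_vanish hMu
          intro t ht
          rw [dotp_add_left', (key t ht).1]
          exact CharTwo.add_self_eq_zero _
        funext i
        exact hzmod _ _ (congrFun hz i)
      exact Prod.ext hv1 hv2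
    rw [Finset.card_image_of_injective _ hinj, Finset.card_univ]
    simp only [Fintype.card_prod, Fintype.card_fun, Fintype.card_fin, ZMod.card]
    rw [two_mul, pow_add]
  -- 3. linearity
  · intro v w
    refine ⟨v + w, ?_⟩
    funext x
    obtain ⟨d, j⟩ := x
    simp only [gcwL, cwL, Prod.fst_add, Prod.snd_add, dotp_add_left', grayPair,
      Pi.add_apply]
    fin_cases j <;> simp <;> ring
  -- 4. minimum distance lower bound
  · rintro ⟨α, β⟩ hv
    rw [gcwL_weight, card_deltaC_compl]
    have hne : β ≠ 0 ∨ α + β ≠ 0 := by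
      by_contra hc
      push_neg at hc
      obtain ⟨hb, hab⟩ := hc
      have ha : α = 0 := by
        rw [hb, add_zero] at hab
        exact hab
      apply hv
      funext x
      obtain ⟨d, j⟩ := x
      simp only [gcwL, cwL, ha, hb, dotp_zero_left', grayPair]
      fin_cases j <;> simp
    have hbound : 2 ^ (m - 1) - 2 ^ (M.card - 1)
        ≤ ((deltaC M)ᶜ.filter (fun t => dotp β t ≠ 0)).card
          + ((deltaC M)ᶜ.filter (fun t => dotp (α + β) t ≠ 0)).card := by
      rcases hne with h | h
      · exact le_trans (count_compl_lb h) (Nat.le_add_right _ _)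
      · exact le_trans (count_compl_lb h) (Nat.le_add_left _ _)
    calc (2 ^ (m - 1) - 2 ^ (M.card - 1)) * (2 ^ m - 2 ^ N.card)
        = (2 ^ m - 2 ^ N.card) * (2 ^ (m - 1) - 2 ^ (M.card - 1)) := mul_comm _ _
      _ ≤ _ := Nat.mul_le_mul_left _ hbound
  -- 5. minimum distance achieved
  · obtain ⟨i₀, hi₀⟩ := Finset.nonempty_of_ne_empty hM
    have hwt : hammingNorm (gcwL ((deltaC M)ᶜ ×ˢ (deltaC N)ᶜ)
        (Pi.single i₀ 1, Pi.single i₀ 1))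
        = (2 ^ (m - 1) - 2 ^ (M.card - 1)) * (2 ^ m - 2 ^ N.card) := by
      rw [gcwL_weight, card_deltaC_compl]
      simp only [single_add_single']
      rw [count_compl_zero, add_zero, count_compl_meet ⟨i₀, hi₀, by simp⟩]
      ring
    refine ⟨(Pi.single i₀ 1, Pi.single i₀ 1), ?_, hwt⟩
    intro h
    rw [h, hammingNorm_zero] at hwt
    have : 0 < (2 ^ (m - 1) - 2 ^ (M.card - 1)) * (2 ^ m - 2 ^ N.card) :=
      Nat.mul_pos (by omega) (by omega)
    omega
  -- 6. self-orthogonality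
  · intro h3 v w
    rw [gcwL_dot]
    rcases N.eq_empty_or_nonempty with hN | hN
    · have hM3 : 3 ≤ M.card := by
        rw [hN] at h3
        simpa using h3
      rw [Finset.sum_add_distrib, sum_compl_dotp_mul hM3, sum_compl_dotp_mul hM3,
        add_zero, smul_zero]
    · have hNc1 : 1 ≤ N.card := Finset.card_pos.mpr hN
      obtain ⟨k, hk⟩ : ∃ k, ((deltaC N)ᶜ).card = k + k := by
        rw [card_deltaC_compl]
        have e1 : 2 ^ m = 2 * 2 ^ (m - 1) := by
          conv_lhs => rw [← Nat.sub_add_cancel hm]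
          ring
        have e2 : 2 ^ N.card = 2 * 2 ^ (N.card - 1) := by
          conv_lhs => rw [← Nat.sub_add_cancel hNc1]
          ring
        exact ⟨2 ^ (m - 1) - 2 ^ (N.card - 1), by
          rw [e1, e2]
          have : 2 ^ (N.card - 1) ≤ 2 ^ (m - 1) :=
            Nat.pow_le_pow_right (by omega) (by omega)
          omega⟩
      rw [hk, add_nsmul]
      exact CharTwo.add_self_eq_zero _
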